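/- arXiv:2508.13450 — 7 statements merged into one kernel-verified Lean document; each statement's English description precedes it below -/
import Mathlib

section
/- Suppose all N team members share the same cost function C : (ℝ^n)^N → ℝ, that C is convex and continuously differentiable on (ℝ^n)^N, and that each feasible set Ξ_i ⊆ ℝ^n is nonempty, compact and convex. Then every Nash equilibrium u◇ of the game in which each player i minimizes C over u_i ∈ Ξ_i is a team-optimal solution, i.e., C(u◇) ≤ C(u) for all u ∈ Ξ. -/
open Filter Set Topology

/-- If all `N` team members share the same cost function `C`, which is convex
and continuously differentiable on `(ℝ^n)^N`, and each feasible set `Ξ i` is nonempty,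
compact and convex, then every Nash equilibrium of the common-cost game is a team-optimal
solution. -/
theorem NE_is_team_optimal_common_cost
    (n N : ℕ)
    (Ξ : Fin N → Set (EuclideanSpace ℝ (Fin n)))
    (C : (Fin N → EuclideanSpace ℝ (Fin n)) → ℝ)
    (hne : ∀ i, (Ξ i).Nonempty)
    (hcpt : ∀ i, IsCompact (Ξ i))
    (hcvx : ∀ i, Convex ℝ (Ξ i))
    (hC_convex : ConvexOn ℝ Set.univ C)
    (hC_smooth : ContDiff ℝ 1 C)
    (ud : Fin N → EuclideanSpace ℝ (Fin n))
    (hud_mem : ∀ i, ud i ∈ Ξ i)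
    (hud_NE : ∀ i, ∀ v ∈ Ξ i, C ud ≤ C (Function.update ud i v)) :
    ∀ u : Fin N → EuclideanSpace ℝ (Fin n), (∀ i, u i ∈ Ξ i) → C ud ≤ C u := by
  intro u hu
  have hdiff : Differentiable ℝ C := hC_smooth.differentiable one_ne_zero
  set D := fderiv ℝ C ud with hDdef
  -- derivative of C along a line through ud
  have hline : ∀ w : Fin N → EuclideanSpace ℝ (Fin n),
      HasDerivAt (fun t : ℝ => C (ud + t • w)) (D w) 0 := by
    intro w
    have h1 : HasDerivAt (fun t : ℝ => ud + t • w) w 0 := by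
      simpa using ((hasDerivAt_id (0 : ℝ)).smul_const w).const_add ud
    have h2 : HasFDerivAt C D (ud + (0 : ℝ) • w) := by
      simpa using (hdiff ud).hasFDerivAt
    exact h2.comp_hasDerivAt 0 h1
  -- directional derivative nonneg in each coordinate direction
  have key : ∀ i, 0 ≤ D (Pi.single i (u i - ud i)) := by
    intro i
    set w : Fin N → EuclideanSpace ℝ (Fin n) := Pi.single i (u i - ud i) with hw
    have hg := hline w
    have hev : ∀ᶠ t in 𝓝[>] (0 : ℝ), 0 ≤ slope (fun t : ℝ => C (ud + t • w)) 0 t := by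
      filter_upwards [Ioc_mem_nhdsGT_of_mem (Set.left_mem_Ico.2 one_pos)] with t ht
      have hmem : ud i + t • (u i - ud i) ∈ Ξ i := by
        have h := (hcvx i) (hud_mem i) (hu i) (by linarith [ht.2] : (0:ℝ) ≤ 1 - t) ht.1.le
          (by ring)
        have : (1 - t) • ud i + t • u i = ud i + t • (u i - ud i) := by
          simp [sub_smul, smul_sub, one_smul]; abel
        rwa [this] at h
      have hCle : C ud ≤ C (ud + t • w) := by
        have heq : ud + t • w = Function.update ud i (ud i + t • (u i - ud i)) := by
          funext j
          by_cases hj : j = i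
          · subst hj; simp [hw]
          · simp [hw, Function.update_of_ne hj, Pi.single_eq_of_ne hj]
        rw [heq]
        exact hud_NE i _ hmem
      have h0 : ud + (0:ℝ) • w = ud := by simp
      rw [slope_def_field, h0, sub_zero]
      exact div_nonneg (sub_nonneg.2 hCle) ht.1.le
    have htend : Tendsto (slope (fun t : ℝ => C (ud + t • w)) 0) (𝓝[>] (0:ℝ)) (𝓝 (D w)) :=
      (hasDerivAt_iff_tendsto_slope.1 hg).mono_left
        (nhdsWithin_mono _ (fun x hx => ne_of_gt hx))
    exact ge_of_tendsto htend hev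
  -- hence derivative along u - ud is nonneg
  have hDpos : 0 ≤ D (u - ud) := by
    have hsum : (∑ i, Pi.single i (u i - ud i)) = u - ud := by
      have := Finset.univ_sum_single (u - ud)
      simpa [Pi.sub_apply] using this
    have : D (u - ud) = ∑ i, D (Pi.single i (u i - ud i)) := by
      rw [← map_sum, hsum]
    rw [this]
    exact Finset.sum_nonneg fun i _ => key i
  -- convexity along the segment
  have hconv1 : ConvexOn ℝ Set.univ (fun t : ℝ => C (ud + t • (u - ud))) := by
    have h := hC_convex.comp_affineMap (AffineMap.lineMap ud u : ℝ →ᵃ[ℝ] _)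
    simp only [Set.preimage_univ] at h
    convert h using 2 with t
    · rfl
    · rfl
    · rfl
    · rfl
    simp [Function.comp, AffineMap.lineMap_apply]
    abel
  have hslope := hconv1.le_slope_of_hasDerivAt (Set.mem_univ (0:ℝ)) (Set.mem_univ (1:ℝ))
    one_pos (hline (u - ud))
  rw [slope_def_field] at hslope
  simp only [one_smul, zero_smul, add_zero, add_sub_cancel, sub_zero, div_one] at hslope
  linarith
end

section
/- Let C : (ℝ^n)^N → ℝ be convex and continuously differentiable, let each individual cost C_i : (ℝ^n)^N → ℝ be continuously differentiable, and let each feasible set Ξ_i ⊆ ℝ^n be nonempty, compact and convex. Suppose the alignment condition holds: for every i, every profile u ∈ (ℝ^n)^N, and every unilateral deviation u_i' ∈ ℝ^n, C(u_i', u_{-i}) − C(u) = C_i(u_i', u_{-i}) − C_i(u). Then every Nash equilibrium u◇ of the game with costs C_1, …, C_N is a team-optimal solution, i.e., C(u◇) ≤ C(u) for all u ∈ Ξ. -/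
/-- Let `C` be convex and continuously differentiable, each individual cost
`C_i` continuously differentiable, and each feasible set `Ξ i` nonempty, compact and
convex. Under the alignment condition
`C(u_i', u_{-i}) − C(u) = C_i(u_i', u_{-i}) − C_i(u)`, every Nash equilibrium of the game
with costs `C_1, …, C_N` is a team-optimal solution. -/
theorem NE_is_team_optimal_aligned
    (n N : ℕ)
    (Ξ : Fin N → Set (EuclideanSpace ℝ (Fin n)))
    (C : (Fin N → EuclideanSpace ℝ (Fin n)) → ℝ)
    (Ci : Fin N → (Fin N → EuclideanSpace ℝ (Fin n)) → ℝ)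
    (hC_convex : ConvexOn ℝ Set.univ C)
    (hC_smooth : ContDiff ℝ 1 C)
    (hCi_smooth : ∀ i, ContDiff ℝ 1 (Ci i))
    (hne : ∀ i, (Ξ i).Nonempty)
    (hcpt : ∀ i, IsCompact (Ξ i))
    (hcvx : ∀ i, Convex ℝ (Ξ i))
    (halign : ∀ i (u : Fin N → EuclideanSpace ℝ (Fin n)) (v : EuclideanSpace ℝ (Fin n)),
      C (Function.update u i v) - C u = Ci i (Function.update u i v) - Ci i u)
    (ud : Fin N → EuclideanSpace ℝ (Fin n))
    (hud_mem : ∀ i, ud i ∈ Ξ i)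
    (hud_NE : ∀ i, ∀ v ∈ Ξ i, Ci i ud ≤ Ci i (Function.update ud i v)) :
    ∀ u : Fin N → EuclideanSpace ℝ (Fin n), (∀ i, u i ∈ Ξ i) → C ud ≤ C u := by
  intro u hu
  classical
  set d : Fin N → EuclideanSpace ℝ (Fin n) := u - ud with hd
  have hCdiff : Differentiable ℝ C := hC_smooth.differentiable one_ne_zero
  set f' := fderiv ℝ C ud with hf'
  -- NE + alignment : ud minimizes C under unilateral deviations
  have hmin : ∀ i, ∀ v ∈ Ξ i, C ud ≤ C (Function.update ud i v) := by
    intro i v hv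
    have h1 := halign i ud v
    have h2 := hud_NE i v hv
    linarith
  -- directional derivatives
  have hder : ∀ w : Fin N → EuclideanSpace ℝ (Fin n),
      HasDerivAt (fun t : ℝ => C (ud + t • w)) (f' w) 0 := by
    intro w
    have h1 : HasDerivAt (fun t : ℝ => ud + t • w) w 0 := by
      simpa using ((hasDerivAt_id (0:ℝ)).smul_const w).const_add ud
    have h2 : HasFDerivAt C f' (ud + (0:ℝ) • w) := by
      simpa using (hCdiff ud).hasFDerivAt
    exact (h2.comp_hasDerivAt 0 h1)
  have hslope : ∀ w : Fin N → EuclideanSpace ℝ (Fin n),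
      Filter.Tendsto (slope (fun t : ℝ => C (ud + t • w)) 0)
        (nhdsWithin 0 (Set.Ioi 0)) (nhds (f' w)) := by
    intro w
    exact (hasDerivAt_iff_tendsto_slope.mp (hder w)).mono_left
      (nhdsWithin_mono _ fun x hx => ne_of_gt hx)
  -- each coordinate directional derivative is nonnegative
  have hcoord : ∀ i, 0 ≤ f' (Pi.single i (d i)) := by
    intro i
    refine ge_of_tendsto (hslope (Pi.single i (d i))) ?_
    filter_upwards [Ioc_mem_nhdsGT_of_mem
      (by constructor <;> norm_num : (0:ℝ) ∈ Set.Ico 0 1)] with t ht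
    have hmemb : ud i + t • d i ∈ Ξ i := by
      have := (hcvx i) (hud_mem i) (hu i) (by linarith [ht.1, ht.2] : (0:ℝ) ≤ 1 - t)
        (le_of_lt ht.1) (by ring)
      have heq : (1 - t) • ud i + t • u i = ud i + t • d i := by
        simp only [hd, Pi.sub_apply]
        module
      rwa [heq] at this
    have hupd : ud + t • (Pi.single i (d i) : Fin N → EuclideanSpace ℝ (Fin n)) = Function.update ud i (ud i + t • d i) := by
      funext j
      by_cases hji : j = i
      · subst hji; simp
      · simp [Function.update_of_ne hji, Pi.single_eq_of_ne hji]
    have hge : C ud ≤ C (ud + t • (Pi.single i (d i) : Fin N → EuclideanSpace ℝ (Fin n))) := by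
      rw [hupd]; exact hmin i _ hmemb
    have h0 : C (ud + (0:ℝ) • (Pi.single i (d i) : Fin N → EuclideanSpace ℝ (Fin n))) = C ud := by simp
    simp only [slope_def_field, div_eq_mul_inv]
    rw [sub_zero]
    have : 0 ≤ C (ud + t • (Pi.single i (d i) : Fin N → EuclideanSpace ℝ (Fin n))) - C (ud + (0:ℝ) • (Pi.single i (d i) : Fin N → EuclideanSpace ℝ (Fin n))) := by
      rw [h0]; linarith
    have ht' : (0:ℝ) ≤ t⁻¹ := inv_nonneg.mpr (le_of_lt ht.1)
    calc (0:ℝ) = 0 * t⁻¹ := by ring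
    _ ≤ _ := by
      apply mul_le_mul_of_nonneg_right _ ht'
      simpa [sub_zero] using this
  -- full directional derivative is nonnegative
  have hsum : 0 ≤ f' d := by
    have hdsum : d = ∑ i, Pi.single i (d i) := (Finset.univ_sum_single d).symm
    rw [hdsum, map_sum]
    exact Finset.sum_nonneg fun i _ => hcoord i
  -- convexity : f' d ≤ C u - C ud
  have hub : f' d ≤ C u - C ud := by
    refine le_of_tendsto (hslope d) ?_
    filter_upwards [Ioc_mem_nhdsGT_of_mem
      (by constructor <;> norm_num : (0:ℝ) ∈ Set.Ico 0 1)] with t ht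
    have hcv := hC_convex.2 (Set.mem_univ ud) (Set.mem_univ u)
      (by linarith [ht.2] : (0:ℝ) ≤ 1 - t) (le_of_lt ht.1) (by ring)
    have heq : (1 - t) • ud + t • u = ud + t • d := by
      funext j
      simp only [hd, Pi.add_apply, Pi.smul_apply, Pi.sub_apply]
      module
    simp only [smul_eq_mul] at hcv
    rw [heq] at hcv
    have h0 : C (ud + (0:ℝ) • d) = C ud := by simp
    rw [slope_def_field, sub_zero, h0, div_le_iff₀ ht.1]
    nlinarith [ht.1, hcv]
  linarith
end

section
/- Let each feasible set Ξ_i ⊆ ℝ^n be nonempty, compact and convex, let the team cost C : (ℝ^n)^N → ℝ be convex and continuously differentiable, and let each individual cost C_i : (ℝ^n)^N → ℝ be continuously differentiable and convex in u_i. Let u◇ ∈ Ξ be a Nash equilibrium of the game with costs C_1, …, C_N. Then u◇ is a team-optimal solution if and only if for every i there exists an open neighborhood δ(u_i◇) of u_i◇ in ℝ^n such that for all u_i ∈ δ(u_i◇) ∩ Ξ_i, both (u_i − u_i◇)ᵀ ∇_{u_i} C_i(u◇) ≥ 0 and (u_i − u_i◇)ᵀ ∇_{u_i} C(u◇) ≥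 0. -/
open RealInnerProductSpace


lemma aux_inner_gradient_eq {E : Type*} [NormedAddCommGroup E] [InnerProductSpace ℝ E]
    [CompleteSpace E] {g : E → ℝ} {f' : E →L[ℝ] ℝ} {x : E}
    (hg : HasFDerivAt g f' x) (w : E) :
    ⟪w, gradient g x⟫ = f' w := by
  rw [real_inner_comm]
  simp only [gradient, hg.fderiv]
  exact InnerProductSpace.toDual_symm_apply

lemma aux_convex_first_order {E : Type*} [NormedAddCommGroup E] [NormedSpace ℝ E]
    {f : E → ℝ} {f' : E →L[ℝ] ℝ} {x : E}
    (hf : ConvexOn ℝ Set.univ f) (hd : HasFDerivAt f f' x) (y : E) :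
    f x + f' (y - x) ≤ f y := by
  set φ : ℝ → ℝ := fun t => f (x + t • (y - x)) with hφdef
  have hφc : ConvexOn ℝ Set.univ φ := by
    have h := hf.comp_affineMap (AffineMap.lineMap x y : ℝ →ᵃ[ℝ] E)
    have he : (f ∘ (AffineMap.lineMap x y : ℝ →ᵃ[ℝ] E)) = φ := by
      funext t
      simp [φ, AffineMap.lineMap_apply, add_comm]
    rw [he] at h
    simpa using h
  have hφd : HasDerivAt φ (f' (y - x)) 0 := by
    have h1 : HasDerivAt (fun t : ℝ => x + t • (y - x)) (y - x) 0 := by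
      simpa using ((hasDerivAt_id (0 : ℝ)).smul_const (y - x)).const_add x
    have h2 : HasFDerivAt f f' (x + (0 : ℝ) • (y - x)) := by simpa using hd
    exact h2.comp_hasDerivAt 0 h1
  have hs := hφc.le_slope_of_hasDerivAt (Set.mem_univ (0 : ℝ)) (Set.mem_univ 1) one_pos hφd
  have h0 : φ 0 = f x := by simp [φ]
  have h1 : φ 1 = f y := by simp [φ]
  have hsl : slope φ 0 1 = φ 1 - φ 0 := by simp [slope]
  rw [hsl, h0, h1] at hs
  linarith

/-- With each `Ξ i ⊆ ℝ^n` nonempty, compact and convex, team cost `C` convex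
and continuously differentiable, and individual costs `C_i` continuously differentiable
and convex in `u_i`, a Nash equilibrium `u◇` is a team-optimal solution if and only if
for every `i` there is an open neighborhood `δ(u_i◇)` of `u_i◇` in `ℝ^n` such that for all
`u_i ∈ δ(u_i◇) ∩ Ξ i`, both `(u_i − u_i◇)ᵀ ∇_{u_i} C_i(u◇) ≥ 0` and
`(u_i − u_i◇)ᵀ ∇_{u_i} C(u◇) ≥ 0`. -/
theorem NE_team_optimal_iff_multidim
    (n N : ℕ)
    (Ξ : Fin N → Set (EuclideanSpace ℝ (Fin n)))
    (hne : ∀ i, (Ξ i).Nonempty)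
    (hcpt : ∀ i, IsCompact (Ξ i))
    (hcvx : ∀ i, Convex ℝ (Ξ i))
    (C : (Fin N → EuclideanSpace ℝ (Fin n)) → ℝ)
    (Ci : Fin N → (Fin N → EuclideanSpace ℝ (Fin n)) → ℝ)
    (hC_convex : ConvexOn ℝ Set.univ C)
    (hC_smooth : ContDiff ℝ 1 C)
    (hCi_smooth : ∀ i, ContDiff ℝ 1 (Ci i))
    (hCi_convex : ∀ i (u : Fin N → EuclideanSpace ℝ (Fin n)),
      ConvexOn ℝ Set.univ (fun v => Ci i (Function.update u i v)))
    (ud : Fin N → EuclideanSpace ℝ (Fin n))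
    (hud_mem : ∀ i, ud i ∈ Ξ i)
    (hud_NE : ∀ i, ∀ v ∈ Ξ i, Ci i ud ≤ Ci i (Function.update ud i v)) :
    (∀ u : Fin N → EuclideanSpace ℝ (Fin n), (∀ i, u i ∈ Ξ i) → C ud ≤ C u)
      ↔
    (∀ i, ∃ δ : Set (EuclideanSpace ℝ (Fin n)), IsOpen δ ∧ ud i ∈ δ ∧
      ∀ v ∈ δ ∩ Ξ i,
        (0 : ℝ) ≤ ⟪v - ud i, gradient (fun w => Ci i (Function.update ud i w)) (ud i)⟫ ∧
        (0 : ℝ) ≤ ⟪v - ud i, gradient (fun w => C (Function.update ud i w)) (ud i)⟫) := by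
  classical
  have hCdiff : Differentiable ℝ C := hC_smooth.differentiable one_ne_zero
  set L : Fin N → (EuclideanSpace ℝ (Fin n) →L[ℝ] (Fin N → EuclideanSpace ℝ (Fin n))) :=
    fun i => ContinuousLinearMap.pi (Pi.single i (ContinuousLinearMap.id ℝ _)) with hLdef
  have hLapply : ∀ i (w : EuclideanSpace ℝ (Fin n)), (L i) w = Pi.single i w := by
    intro i w
    funext j
    rcases eq_or_ne j i with rfl | h
    · simp [L, ContinuousLinearMap.pi_apply]
    · simp [L, ContinuousLinearMap.pi_apply, Pi.single_eq_of_ne h]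
  have hupd : ∀ i, HasFDerivAt (Function.update ud i) (L i) (ud i) :=
    fun i => hasFDerivAt_update ud (ud i)
  have hgC : ∀ i, HasFDerivAt (fun w => C (Function.update ud i w))
      ((fderiv ℝ C ud).comp (L i)) (ud i) := by
    intro i
    have h0 : Function.update ud i (ud i) = ud := Function.update_eq_self i ud
    have hg : HasFDerivAt C (fderiv ℝ C ud) (Function.update ud i (ud i)) := by
      rw [h0]; exact (hCdiff ud).hasFDerivAt
    exact hg.comp (ud i) (hupd i)
  have hgCi : ∀ i, HasFDerivAt (fun w => Ci i (Function.update ud i w))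
      ((fderiv ℝ (Ci i) ud).comp (L i)) (ud i) := by
    intro i
    have h0 : Function.update ud i (ud i) = ud := Function.update_eq_self i ud
    have hg : HasFDerivAt (Ci i) (fderiv ℝ (Ci i) ud) (Function.update ud i (ud i)) := by
      rw [h0]; exact ((hCi_smooth i).differentiable one_ne_zero ud).hasFDerivAt
    exact hg.comp (ud i) (hupd i)
  constructor
  · -- team optimal → local variational inequalities
    intro hopt i
    refine ⟨Set.univ, isOpen_univ, Set.mem_univ _, ?_⟩
    rintro v ⟨-, hv⟩
    have hseg : v - ud i ∈ posTangentConeAt (Ξ i) (ud i) :=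
      sub_mem_posTangentConeAt_of_segment_subset
        ((hcvx i).segment_subset (hud_mem i) hv)
    constructor
    · have hmin : IsLocalMinOn (fun w => Ci i (Function.update ud i w)) (Ξ i) (ud i) := by
        have : ∀ᶠ x in nhdsWithin (ud i) (Ξ i),
            Ci i (Function.update ud i (ud i)) ≤ Ci i (Function.update ud i x) := by
          apply eventually_nhdsWithin_of_forall
          intro x hx
          rw [Function.update_eq_self i ud]
          exact hud_NE i x hx
        exact this
      have hnn := hmin.hasFDerivWithinAt_nonneg ((hgCi i).hasFDerivWithinAt) hseg
      rw [aux_inner_gradient_eq (hgCi i)]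
      exact hnn
    · have hmin : IsLocalMinOn (fun w => C (Function.update ud i w)) (Ξ i) (ud i) := by
        have : ∀ᶠ x in nhdsWithin (ud i) (Ξ i),
            C (Function.update ud i (ud i)) ≤ C (Function.update ud i x) := by
          apply eventually_nhdsWithin_of_forall
          intro x hx
          rw [Function.update_eq_self i ud]
          apply hopt
          intro j
          rcases eq_or_ne j i with rfl | h
          · simpa using hx
          · rw [Function.update_of_ne h]
            exact hud_mem j
        exact this
      have hnn := hmin.hasFDerivWithinAt_nonneg ((hgC i).hasFDerivWithinAt) hseg
      rw [aux_inner_gradient_eq (hgC i)]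
      exact hnn
  · -- local variational inequalities → team optimal
    intro hloc u hu
    have key : ∀ i, ∀ v ∈ Ξ i, (0 : ℝ) ≤ (fderiv ℝ C ud) (Pi.single i (v - ud i)) := by
      intro i v hv
      obtain ⟨δ, hδo, hδm, hδ⟩ := hloc i
      have hcont : ContinuousAt (fun t : ℝ => ud i + t • (v - ud i)) 0 := by fun_prop
      have hmem : ∀ᶠ t : ℝ in nhds 0, ud i + t • (v - ud i) ∈ δ := by
        have := hcont.eventually_mem (hδo.mem_nhds (by simpa using hδm))
        simpa using this
      have h1 : ∀ᶠ t : ℝ in nhdsWithin 0 (Set.Ioi 0), ud i + t • (v - ud i) ∈ δ :=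
        hmem.filter_mono nhdsWithin_le_nhds
      have h2 : ∀ᶠ t : ℝ in nhdsWithin 0 (Set.Ioi 0), t < 1 :=
        (eventually_lt_nhds zero_lt_one).filter_mono nhdsWithin_le_nhds
      have h3 : ∀ᶠ t : ℝ in nhdsWithin 0 (Set.Ioi 0), (0 : ℝ) < t :=
        self_mem_nhdsWithin
      obtain ⟨t, htδ, ht1, ht0⟩ := (h1.and (h2.and h3)).exists
      have hwΞ : ud i + t • (v - ud i) ∈ Ξ i :=
        (hcvx i).add_smul_sub_mem (hud_mem i) hv ⟨ht0.le, ht1.le⟩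
      have hineq := (hδ _ ⟨htδ, hwΞ⟩).2
      have hsub : (ud i + t • (v - ud i)) - ud i = t • (v - ud i) := by abel
      rw [hsub, real_inner_smul_left] at hineq
      have hnn : (0 : ℝ) ≤ ⟪v - ud i, gradient (fun w => C (Function.update ud i w)) (ud i)⟫ :=
        (mul_nonneg_iff_of_pos_left ht0).mp hineq
      rw [aux_inner_gradient_eq (hgC i)] at hnn
      simpa [hLapply] using hnn
    have hfo := aux_convex_first_order hC_convex (hCdiff ud).hasFDerivAt u
    have hrepr : u - ud = ∑ i, Pi.single i (u i - ud i) := by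
      rw [Finset.univ_sum_single (fun i => u i - ud i)]
      rfl
    have hsum : (fderiv ℝ C ud) (u - ud) =
        ∑ i, (fderiv ℝ C ud) (Pi.single i (u i - ud i)) := by
      rw [hrepr, map_sum]
    have hnn : (0 : ℝ) ≤ (fderiv ℝ C ud) (u - ud) := by
      rw [hsum]
      exact Finset.sum_nonneg fun i _ => key i (u i) (hu i)
    linarith
end

section
/- Let K ⊆ ℝ^m be nonempty, closed and convex, and let G : ℝ^m → ℝ^m be κ-strongly monotone and ν-Lipschitz continuous (κ, ν > 0). Let u* ∈ K satisfy the variational inequality (u − u*)ᵀ G(u*) ≥ 0 for all u ∈ K, and define the projected-gradient residual h(u) := u − Π_K(u − G(u)). Then for every u ∈ K, κ·‖u − u*‖ ≤ (ν + 1)·‖h(u)‖. -/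
open RealInnerProductSpace

/-- `P` is the Euclidean (metric) projection onto the set `K`: `P x ∈ K` and `P x` is a
closest point of `K` to `x`. -/
def IsMetricProjection {m : ℕ} (K : Set (EuclideanSpace ℝ (Fin m)))
    (P : EuclideanSpace ℝ (Fin m) → EuclideanSpace ℝ (Fin m)) : Prop :=
  ∀ x, P x ∈ K ∧ ∀ y ∈ K, ‖x - P x‖ ≤ ‖x - y‖

lemma proj_vi {m : ℕ} {K : Set (EuclideanSpace ℝ (Fin m))} (hK : Convex ℝ K)
    {x w : EuclideanSpace ℝ (Fin m)} (hw : w ∈ K)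
    (hmin : ∀ y ∈ K, ‖x - w‖ ≤ ‖x - y‖) :
    ∀ y ∈ K, ⟪x - w, y - w⟫ ≤ 0 := by
  intro y hy
  by_contra hc
  push_neg at hc
  set a := x - w
  set b := y - w
  have hb : b ≠ 0 := by
    intro h
    rw [h, inner_zero_right] at hc
    exact lt_irrefl _ hc
  have hbn : (0:ℝ) < ‖b‖ := norm_pos_iff.mpr hb
  have hb2 : (0:ℝ) < ‖b‖^2 := by positivity
  set t : ℝ := min 1 (⟪a, b⟫ / ‖b‖^2) with ht
  have ht0 : 0 < t := lt_min one_pos (div_pos hc hb2)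
  have ht1 : t ≤ 1 := min_le_left _ _
  have hz : w + t • b ∈ K := by
    have := hK hw hy (by linarith : (0:ℝ) ≤ 1 - t) ht0.le (by ring)
    convert this using 1
    simp only [b]
    module
  have hkey := hmin _ hz
  have hsq : ‖a‖^2 ≤ ‖a - t • b‖^2 := by
    have hxz : x - (w + t • b) = a - t • b := by simp only [a]; module
    rw [← hxz]
    nlinarith [norm_nonneg (x - (w + t•b)), norm_nonneg (x - w)]
  have hexp : ‖a - t • b‖^2 = ‖a‖^2 - 2*t*⟪a,b⟫ + t^2*‖b‖^2 := by
    rw [norm_sub_sq_real, real_inner_smul_right, norm_smul]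
    simp [mul_pow]
    ring
  have h2 : 2*⟪a,b⟫ ≤ t*‖b‖^2 := by
    rw [hexp] at hsq
    nlinarith
  have h3 : t*‖b‖^2 ≤ ⟪a,b⟫ := by
    calc t*‖b‖^2 ≤ (⟪a,b⟫/‖b‖^2)*‖b‖^2 := by
          apply mul_le_mul_of_nonneg_right (min_le_right _ _) hb2.le
      _ = ⟪a,b⟫ := by field_simp
  linarith

/-- Let `K ⊆ ℝ^m` be nonempty, closed and convex, `G` κ-strongly monotone and
ν-Lipschitz, `u* ∈ K` a solution of the variational inequality `(u − u*)ᵀG(u*) ≥ 0` for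
all `u ∈ K`, and `h(u) := u − Π_K(u − G(u))` the projected-gradient residual. Then for all
`u ∈ K`, `κ‖u − u*‖ ≤ (ν + 1)‖h(u)‖`. -/
theorem residual_error_bound
    (m : ℕ)
    (K : Set (EuclideanSpace ℝ (Fin m)))
    (hK_ne : K.Nonempty) (hK_cl : IsClosed K) (hK_cv : Convex ℝ K)
    (G : EuclideanSpace ℝ (Fin m) → EuclideanSpace ℝ (Fin m))
    (κ ν : ℝ) (hκ : 0 < κ) (hν : 0 < ν)
    (hmono : ∀ x y, κ * ‖x - y‖ ^ 2 ≤ ⟪G x - G y, x - y⟫)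
    (hlip : ∀ x y, ‖G x - G y‖ ≤ ν * ‖x - y‖)
    (P : EuclideanSpace ℝ (Fin m) → EuclideanSpace ℝ (Fin m))
    (hP : IsMetricProjection K P)
    (ustar : EuclideanSpace ℝ (Fin m))
    (hustar_mem : ustar ∈ K)
    (hVI : ∀ u ∈ K, (0 : ℝ) ≤ ⟪u - ustar, G ustar⟫) :
    ∀ u ∈ K, κ * ‖u - ustar‖ ≤ (ν + 1) * ‖u - P (u - G u)‖ := by
  intro u hu
  set w := P (u - G u) with hw
  obtain ⟨hwK, hmin⟩ := hP (u - G u)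
  have hproj : ⟪u - G u - w, ustar - w⟫ ≤ 0 :=
    proj_vi hK_cv hwK hmin ustar hustar_mem
  have hVIw : (0:ℝ) ≤ ⟪w - ustar, G ustar⟫ := hVI w hwK
  have hVIw' : ⟪ustar - w, G ustar⟫ ≤ 0 := by
    have : ⟪ustar - w, G ustar⟫ = -⟪w - ustar, G ustar⟫ := by
      rw [← inner_neg_left]; congr 1; module
    linarith [this ▸ (neg_nonpos_of_nonneg hVIw)]
  have hid : ⟪u - G u - w, ustar - w⟫ + ⟪ustar - w, G ustar⟫
      - ⟪G u - G ustar, u - ustar⟫ - ⟪u-w,u-w⟫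
      + ⟪G u - G ustar, u-w⟫ + ⟪u-w, u - ustar⟫ = 0 := by
    simp only [inner_sub_left, inner_sub_right, real_inner_comm (G ustar) ustar,
      real_inner_comm (G ustar) w, real_inner_comm w u]
    ring
  have hmono' := hmono u ustar
  have hcs1 : ⟪G u - G ustar, u - w⟫ ≤ ν * ‖u - ustar‖ * ‖u - w‖ := by
    calc ⟪G u - G ustar, u - w⟫ ≤ ‖G u - G ustar‖ * ‖u - w‖ :=
          real_inner_le_norm _ _
      _ ≤ ν * ‖u - ustar‖ * ‖u - w‖ :=
          mul_le_mul_of_nonneg_right (hlip u ustar) (norm_nonneg _)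
  have hcs2 : ⟪u - w, u - ustar⟫ ≤ ‖u - w‖ * ‖u - ustar‖ := real_inner_le_norm _ _
  have hself : (0:ℝ) ≤ ⟪u-w, u-w⟫ := real_inner_self_nonneg
  have key : κ * ‖u - ustar‖^2 ≤ (ν + 1) * ‖u - ustar‖ * ‖u - w‖ := by nlinarith
  rcases eq_or_lt_of_le (norm_nonneg (u - ustar)) with hd | hd
  · rw [← hd, mul_zero]
    positivity
  · have := mul_le_mul_of_nonneg_right key (le_of_lt (inv_pos.mpr hd))
    calc κ * ‖u - ustar‖ = κ * ‖u - ustar‖^2 * (‖u - ustar‖)⁻¹ := by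
          field_simp
      _ ≤ (ν + 1) * ‖u - ustar‖ * ‖u - w‖ * (‖u - ustar‖)⁻¹ := this
      _ = (ν + 1) * ‖u - w‖ := by field_simp
end

section
/- Let K ⊆ ℝ^m be nonempty, closed and convex, let G : ℝ^m → ℝ^m be κ-strongly monotone and ν-Lipschitz continuous (κ, ν > 0), and let F : ℝ^m → ℝ^m. Suppose u* ∈ K satisfies u* = Π_K(u* − G(u*)) and u◇ ∈ K satisfies u◇ = Π_K(u◇ − F(u◇)). Then ‖u◇ − u*‖ ≤ ((ν + 1)/κ)·‖F(u◇) − G(u◇)‖. -/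
open RealInnerProductSpace

lemma metric_projection_vi {m : ℕ} {K : Set (EuclideanSpace ℝ (Fin m))}
    (hK_cv : Convex ℝ K)
    {P : EuclideanSpace ℝ (Fin m) → EuclideanSpace ℝ (Fin m)}
    (hP : IsMetricProjection K P) (x : EuclideanSpace ℝ (Fin m)) :
    ∀ y ∈ K, ⟪x - P x, y - P x⟫ ≤ 0 := by
  obtain ⟨hmem, hmin⟩ := hP x
  refine (norm_eq_iInf_iff_real_inner_le_zero hK_cv hmem).mp ?_
  haveI : Nonempty K := ⟨⟨P x, hmem⟩⟩
  have hbdd : BddBelow (Set.range fun w : K => ‖x - (w : EuclideanSpace ℝ (Fin m))‖) :=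
    ⟨0, fun _ ⟨_, h⟩ => h ▸ norm_nonneg _⟩
  exact le_antisymm (le_ciInf fun w => hmin w w.2) (ciInf_le hbdd ⟨P x, hmem⟩)

/-- Let `K ⊆ ℝ^m` be nonempty, closed and convex, `G` κ-strongly monotone
and ν-Lipschitz, and `F : ℝ^m → ℝ^m`. If `u* ∈ K` satisfies `u* = Π_K(u* − G(u*))` and
`u◇ ∈ K` satisfies `u◇ = Π_K(u◇ − F(u◇))`, then
`‖u◇ − u*‖ ≤ ((ν + 1)/κ)‖F(u◇) − G(u◇)‖`. -/
theorem fixed_point_deviation_bound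
    (m : ℕ)
    (K : Set (EuclideanSpace ℝ (Fin m)))
    (hK_ne : K.Nonempty) (hK_cl : IsClosed K) (hK_cv : Convex ℝ K)
    (G F : EuclideanSpace ℝ (Fin m) → EuclideanSpace ℝ (Fin m))
    (κ ν : ℝ) (hκ : 0 < κ) (hν : 0 < ν)
    (hmono : ∀ x y, κ * ‖x - y‖ ^ 2 ≤ ⟪G x - G y, x - y⟫)
    (hlip : ∀ x y, ‖G x - G y‖ ≤ ν * ‖x - y‖)
    (P : EuclideanSpace ℝ (Fin m) → EuclideanSpace ℝ (Fin m))
    (hP : IsMetricProjection K P)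
    (ustar ud : EuclideanSpace ℝ (Fin m))
    (hustar_mem : ustar ∈ K) (hud_mem : ud ∈ K)
    (hustar_fix : ustar = P (ustar - G ustar))
    (hud_fix : ud = P (ud - F ud)) :
    ‖ud - ustar‖ ≤ ((ν + 1) / κ) * ‖F ud - G ud‖ := by
  have h1 := metric_projection_vi hK_cv hP (ustar - G ustar) ud hud_mem
  have h2 := metric_projection_vi hK_cv hP (ud - F ud) ustar hustar_mem
  rw [← hustar_fix] at h1
  rw [← hud_fix] at h2
  have h1' : 0 ≤ ⟪G ustar, ud - ustar⟫ := by
    have : ustar - G ustar - ustar = -(G ustar) := by abel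
    rw [this, inner_neg_left] at h1; linarith
  have h2' : ⟪F ud, ud - ustar⟫ ≤ 0 := by
    have : ud - F ud - ud = -(F ud) := by abel
    rw [this, inner_neg_left] at h2
    have : ustar - ud = -(ud - ustar) := by abel
    rw [this, inner_neg_right] at h2; linarith
  have hkey : κ * ‖ud - ustar‖ ^ 2 ≤ ‖F ud - G ud‖ * ‖ud - ustar‖ := by
    have hm := hmono ud ustar
    have hsplit : ⟪G ud - G ustar, ud - ustar⟫
        = ⟪G ud - F ud, ud - ustar⟫ + ⟪F ud, ud - ustar⟫ - ⟪G ustar, ud - ustar⟫ := by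
      rw [inner_sub_left, inner_sub_left]; ring
    have hcs : ⟪G ud - F ud, ud - ustar⟫ ≤ ‖F ud - G ud‖ * ‖ud - ustar‖ := by
      calc ⟪G ud - F ud, ud - ustar⟫ ≤ ‖G ud - F ud‖ * ‖ud - ustar‖ :=
            real_inner_le_norm _ _
        _ = ‖F ud - G ud‖ * ‖ud - ustar‖ := by rw [norm_sub_rev]
    linarith
  rcases eq_or_lt_of_le (norm_nonneg (ud - ustar)) with h0 | h0
  · rw [← h0]
    positivity
  · have hκd : κ * ‖ud - ustar‖ ≤ ‖F ud - G ud‖ := by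
      have := hkey
      rw [sq] at this
      nlinarith
    rw [div_mul_eq_mul_div, le_div_iff₀ hκ]
    nlinarith [norm_nonneg (F ud - G ud)]
end

section
/- Let ζ : ℝ^m × ℝ^n → ℝ^n be continuously differentiable, and suppose there exists μ ∈ [0, 1) such that for every θ ∈ ℝ^m the map ζ(θ, ·) : ℝ^n → ℝ^n is μ-Lipschitz continuous. Let u : ℝ^m → ℝ^n assign to each θ the unique fixed point u(θ) = ζ(θ, u(θ)). Then: (i) for every θ, the matrix I − J_u ζ(θ, u(θ)) is invertible; (ii) u is continuously differentiable with Jacobian J u(θ) = (I − J_u ζ(θ, u(θ)))⁻¹ J_θ ζ(θ, u(θ)); and (iii) for any fixed θ, the matrix iteration z[p+1] = J_u ζ(θ, u(θ)) · z[p] + J_θ ζ(θ, u(θ)), started from any z[0] ∈ ℝ^{n×m}, converges to J u(θ). -/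
open Filter Topology ContinuousLinearMap

private lemma implicit_differentiableAt
    {E F : Type*} [NormedAddCommGroup E] [NormedSpace ℝ E] [CompleteSpace E]
    [NormedAddCommGroup F] [NormedSpace ℝ F] [CompleteSpace F]
    (ζ : E × F → F) (hζ : ContDiff ℝ 1 ζ)
    (u : E → F) (hfix : ∀ θ, ζ (θ, u θ) = u θ)
    (huniq : ∀ θ v, ζ (θ, v) = v → v = u θ)
    (θ₀ : E)
    (hUnit : IsUnit ((1 : F →L[ℝ] F) - (fderiv ℝ ζ (θ₀, u θ₀)).comp (ContinuousLinearMap.inr ℝ E F))) :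
    DifferentiableAt ℝ u θ₀ := by
  set D := fderiv ℝ ζ (θ₀, u θ₀) with hD
  set B := D.comp (ContinuousLinearMap.inr ℝ E F) with hBdef
  set C := D.comp (ContinuousLinearMap.inl ℝ E F) with hCdef
  set Binv := Ring.inverse ((1 : F →L[ℝ] F) - B) with hBinv
  have hDsplit : ∀ p : E × F, D p = C p.1 + B p.2 := by
    intro p
    have : p = ((p.1, 0) : E × F) + (0, p.2) := by simp
    rw [hCdef, hBdef]
    simp only [ContinuousLinearMap.comp_apply, inl_apply, inr_apply]
    conv_lhs => rw [this]
    exact map_add D _ _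
  have hBinvB : Binv.comp ((1 : F →L[ℝ] F) - B) = ContinuousLinearMap.id ℝ F := by
    rw [hBinv, ← ContinuousLinearMap.mul_def, Ring.inverse_mul_cancel _ hUnit]; rfl
  have hBBinv : ((1 : F →L[ℝ] F) - B).comp Binv = ContinuousLinearMap.id ℝ F := by
    rw [hBinv, ← ContinuousLinearMap.mul_def, Ring.mul_inverse_cancel _ hUnit]; rfl
  let A : (E × F) ≃L[ℝ] (E × F) :=
    ContinuousLinearEquiv.equivOfInverse
      ((ContinuousLinearMap.fst ℝ E F).prod (ContinuousLinearMap.snd ℝ E F - D))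
      ((ContinuousLinearMap.fst ℝ E F).prod
        (Binv.comp (ContinuousLinearMap.snd ℝ E F + C.comp (ContinuousLinearMap.fst ℝ E F))))
      (by
        intro p
        have h1 : p.2 - D p + C p.1 = ((1 : F →L[ℝ] F) - B) p.2 := by
          rw [hDsplit p]; simp; abel
        simp only [ContinuousLinearMap.prod_apply, ContinuousLinearMap.comp_apply,
          ContinuousLinearMap.coe_fst', ContinuousLinearMap.coe_snd',
          ContinuousLinearMap.sub_apply, ContinuousLinearMap.add_apply]
        rw [h1]
        have := congrArg (fun (T : F →L[ℝ] F) => T p.2) hBinvB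
        simp only [ContinuousLinearMap.comp_apply, ContinuousLinearMap.id_apply] at this
        rw [this])
      (by
        intro q
        simp only [ContinuousLinearMap.prod_apply, ContinuousLinearMap.comp_apply,
          ContinuousLinearMap.coe_fst', ContinuousLinearMap.coe_snd',
          ContinuousLinearMap.sub_apply, ContinuousLinearMap.add_apply]
        set w := Binv (q.2 + C q.1) with hw
        have h2 : D ((q.1, w) : E × F) = C q.1 + B w := hDsplit (q.1, w)
        rw [h2]
        have := congrArg (fun (T : F →L[ℝ] F) => T (q.2 + C q.1)) hBBinv
        simp only [ContinuousLinearMap.comp_apply, ContinuousLinearMap.id_apply,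
          ContinuousLinearMap.sub_apply, ContinuousLinearMap.one_apply] at this
        rw [hw]
        refine Prod.ext rfl ?_
        rw [show Binv (q.2 + C q.1) - (C q.1 + B (Binv (q.2 + C q.1)))
              = (Binv (q.2 + C q.1) - B (Binv (q.2 + C q.1))) - C q.1 by abel]
        rw [this]
        exact add_sub_cancel_right _ _)
  have hG : HasStrictFDerivAt (fun p : E × F => ((p.1, p.2 - ζ p) : E × F))
      (A : (E × F) →L[ℝ] (E × F)) (θ₀, u θ₀) := by
    have h1 : HasStrictFDerivAt ζ D (θ₀, u θ₀) := hζ.contDiffAt.hasStrictFDerivAt one_ne_zero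
    exact hasStrictFDerivAt_fst.prodMk (hasStrictFDerivAt_snd.sub h1)
  have hGpt : ((((θ₀, u θ₀) : E × F).1, ((θ₀, u θ₀) : E × F).2 - ζ (θ₀, u θ₀)) : E × F)
      = ((θ₀, 0) : E × F) := by simp [hfix θ₀]
  have hri := hG.eventually_right_inverse
  rw [hGpt] at hri
  have hj : Tendsto (fun θ : E => ((θ, 0) : E × F)) (𝓝 θ₀) (𝓝 ((θ₀, 0) : E × F)) :=
    (continuous_id.prodMk continuous_const).tendsto θ₀
  have hev : ∀ᶠ θ in 𝓝 θ₀,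
      hG.localInverse _ _ _ ((θ, 0) : E × F) = ((θ, u θ) : E × F) := by
    filter_upwards [hj.eventually hri] with θ hθ
    set p := hG.localInverse _ _ _ ((θ, 0) : E × F) with hp
    have h1 : p.1 = θ := congrArg Prod.fst hθ
    have h2 : p.2 - ζ p = 0 := congrArg Prod.snd hθ
    have h3 : ζ (θ, p.2) = p.2 := by
      rw [← h1, Prod.mk.eta]
      exact (sub_eq_zero.mp h2).symm
    have h4 : p.2 = u θ := huniq θ p.2 h3
    rw [hp] at h1 h4 ⊢
    exact Prod.ext h1 h4
  have hloc := hG.to_localInverse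
  rw [hGpt] at hloc
  have hjd : HasStrictFDerivAt (fun θ : E => ((θ, 0) : E × F))
      ((ContinuousLinearMap.id ℝ E).prod 0) θ₀ :=
    (hasStrictFDerivAt_id θ₀).prodMk (hasStrictFDerivAt_const 0 θ₀)
  have hcomp := hloc.comp θ₀ hjd
  have hd2 : DifferentiableAt ℝ (fun θ : E => (hG.localInverse _ _ _ ((θ, 0) : E × F)).2) θ₀ :=
    hcomp.differentiableAt.snd
  have huev : (fun θ : E => (hG.localInverse _ _ _ ((θ, 0) : E × F)).2) =ᶠ[𝓝 θ₀] u := by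
    filter_upwards [hev] with θ hθ
    rw [hθ]
  exact (Filter.EventuallyEq.differentiableAt_iff huev).mp hd2


theorem fixed_point_jacobian_iteration
    (m n : ℕ)
    (ζ : EuclideanSpace ℝ (Fin m) × EuclideanSpace ℝ (Fin n) → EuclideanSpace ℝ (Fin n))
    (hζ : ContDiff ℝ 1 ζ)
    (μ : ℝ) (hμ0 : 0 ≤ μ) (hμ1 : μ < 1)
    (hlip : ∀ (θ : EuclideanSpace ℝ (Fin m)) (x y : EuclideanSpace ℝ (Fin n)),
      ‖ζ (θ, x) - ζ (θ, y)‖ ≤ μ * ‖x - y‖)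
    (u : EuclideanSpace ℝ (Fin m) → EuclideanSpace ℝ (Fin n))
    (hfix : ∀ θ, ζ (θ, u θ) = u θ)
    (huniq : ∀ θ v, ζ (θ, v) = v → v = u θ) :
    ContDiff ℝ 1 u ∧
    ∀ θ : EuclideanSpace ℝ (Fin m),
      IsUnit ((1 : EuclideanSpace ℝ (Fin n) →L[ℝ] EuclideanSpace ℝ (Fin n)) -
          fderiv ℝ (fun v => ζ (θ, v)) (u θ)) ∧
      fderiv ℝ u θ =
        (Ring.inverse
            ((1 : EuclideanSpace ℝ (Fin n) →L[ℝ] EuclideanSpace ℝ (Fin n)) -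
              fderiv ℝ (fun v => ζ (θ, v)) (u θ))).comp
          (fderiv ℝ (fun w => ζ (w, u θ)) θ) ∧
      ∀ z0 : EuclideanSpace ℝ (Fin m) →L[ℝ] EuclideanSpace ℝ (Fin n),
        Filter.Tendsto
          (fun p =>
            (fun A => (fderiv ℝ (fun v => ζ (θ, v)) (u θ)).comp A +
              fderiv ℝ (fun w => ζ (w, u θ)) θ)^[p] z0)
          Filter.atTop (nhds (fderiv ℝ u θ)) := by
  have hdiff : Differentiable ℝ ζ := hζ.differentiable one_ne_zero
  -- identification of partial derivatives
  have hprodR : ∀ (θ : (EuclideanSpace ℝ (Fin m))) (v : (EuclideanSpace ℝ (Fin n))), HasFDerivAt (fun x : (EuclideanSpace ℝ (Fin n)) => ζ (θ, x))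
      ((fderiv ℝ ζ (θ, v)).comp (ContinuousLinearMap.inr ℝ (EuclideanSpace ℝ (Fin m)) (EuclideanSpace ℝ (Fin n)))) v := by
    intro θ v
    have h1 : HasFDerivAt (fun x : (EuclideanSpace ℝ (Fin n)) => ((θ, x) : (EuclideanSpace ℝ (Fin m)) × (EuclideanSpace ℝ (Fin n)))) (ContinuousLinearMap.inr ℝ (EuclideanSpace ℝ (Fin m)) (EuclideanSpace ℝ (Fin n))) v := by
      have h0 : HasFDerivAt (fun x : (EuclideanSpace ℝ (Fin n)) => ((θ, x) : (EuclideanSpace ℝ (Fin m)) × (EuclideanSpace ℝ (Fin n))))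
          ((0 : (EuclideanSpace ℝ (Fin n)) →L[ℝ] (EuclideanSpace ℝ (Fin m))).prod (ContinuousLinearMap.id ℝ (EuclideanSpace ℝ (Fin n)))) v :=
        (hasFDerivAt_const θ v).prodMk (hasFDerivAt_id v)
      have heq : ((0 : (EuclideanSpace ℝ (Fin n)) →L[ℝ] (EuclideanSpace ℝ (Fin m))).prod (ContinuousLinearMap.id ℝ (EuclideanSpace ℝ (Fin n))))
          = ContinuousLinearMap.inr ℝ (EuclideanSpace ℝ (Fin m)) (EuclideanSpace ℝ (Fin n)) := by
        refine ContinuousLinearMap.ext fun x => ?_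
        simp
      rw [heq] at h0
      exact h0
    exact ((hdiff (θ, v)).hasFDerivAt.comp v h1)
  have hprodL : ∀ (θ : (EuclideanSpace ℝ (Fin m))) (v : (EuclideanSpace ℝ (Fin n))), HasFDerivAt (fun w : (EuclideanSpace ℝ (Fin m)) => ζ (w, v))
      ((fderiv ℝ ζ (θ, v)).comp (ContinuousLinearMap.inl ℝ (EuclideanSpace ℝ (Fin m)) (EuclideanSpace ℝ (Fin n)))) θ := by
    intro θ v
    have h1 : HasFDerivAt (fun w : (EuclideanSpace ℝ (Fin m)) => ((w, v) : (EuclideanSpace ℝ (Fin m)) × (EuclideanSpace ℝ (Fin n)))) (ContinuousLinearMap.inl ℝ (EuclideanSpace ℝ (Fin m)) (EuclideanSpace ℝ (Fin n))) θ := by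
      have h0 : HasFDerivAt (fun w : (EuclideanSpace ℝ (Fin m)) => ((w, v) : (EuclideanSpace ℝ (Fin m)) × (EuclideanSpace ℝ (Fin n))))
          ((ContinuousLinearMap.id ℝ (EuclideanSpace ℝ (Fin m))).prod (0 : (EuclideanSpace ℝ (Fin m)) →L[ℝ] (EuclideanSpace ℝ (Fin n)))) θ :=
        (hasFDerivAt_id θ).prodMk (hasFDerivAt_const v θ)
      have heq : ((ContinuousLinearMap.id ℝ (EuclideanSpace ℝ (Fin m))).prod (0 : (EuclideanSpace ℝ (Fin m)) →L[ℝ] (EuclideanSpace ℝ (Fin n))))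
          = ContinuousLinearMap.inl ℝ (EuclideanSpace ℝ (Fin m)) (EuclideanSpace ℝ (Fin n)) := by
        refine ContinuousLinearMap.ext fun x => ?_
        simp
      rw [heq] at h0
      exact h0
    exact ((hdiff (θ, v)).hasFDerivAt.comp θ h1)
  have fderivB : ∀ θ : (EuclideanSpace ℝ (Fin m)), fderiv ℝ (fun v => ζ (θ, v)) (u θ)
      = (fderiv ℝ ζ (θ, u θ)).comp (ContinuousLinearMap.inr ℝ (EuclideanSpace ℝ (Fin m)) (EuclideanSpace ℝ (Fin n))) :=
    fun θ => (hprodR θ (u θ)).fderiv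
  have fderivC : ∀ θ : (EuclideanSpace ℝ (Fin m)), fderiv ℝ (fun w => ζ (w, u θ)) θ
      = (fderiv ℝ ζ (θ, u θ)).comp (ContinuousLinearMap.inl ℝ (EuclideanSpace ℝ (Fin m)) (EuclideanSpace ℝ (Fin n))) :=
    fun θ => (hprodL θ (u θ)).fderiv
  -- norm bound on the partial Jacobian in the second variable
  have hBnorm : ∀ θ : (EuclideanSpace ℝ (Fin m)), ‖fderiv ℝ (fun v => ζ (θ, v)) (u θ)‖ ≤ μ := by
    intro θ
    exact norm_fderiv_le_of_lip' ℝ hμ0 (Eventually.of_forall fun x => hlip θ x (u θ))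
  have hBlt : ∀ θ : (EuclideanSpace ℝ (Fin m)), ‖fderiv ℝ (fun v => ζ (θ, v)) (u θ)‖ < 1 :=
    fun θ => lt_of_le_of_lt (hBnorm θ) hμ1
  have hUnit : ∀ θ : (EuclideanSpace ℝ (Fin m)), IsUnit ((1 : (EuclideanSpace ℝ (Fin n)) →L[ℝ] (EuclideanSpace ℝ (Fin n))) - fderiv ℝ (fun v => ζ (θ, v)) (u θ)) :=
    fun θ => isUnit_one_sub_of_norm_lt_one (hBlt θ)
  have hUnit' : ∀ θ : (EuclideanSpace ℝ (Fin m)), IsUnit ((1 : (EuclideanSpace ℝ (Fin n)) →L[ℝ] (EuclideanSpace ℝ (Fin n)))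
      - (fderiv ℝ ζ (θ, u θ)).comp (ContinuousLinearMap.inr ℝ (EuclideanSpace ℝ (Fin m)) (EuclideanSpace ℝ (Fin n)))) := by
    intro θ
    rw [← fderivB θ]; exact hUnit θ
  -- differentiability of u
  have hud : Differentiable ℝ u := fun θ₀ =>
    implicit_differentiableAt ζ hζ u hfix huniq θ₀ (hUnit' θ₀)
  -- the key identity for the derivative
  have hkey : ∀ θ : (EuclideanSpace ℝ (Fin m)), fderiv ℝ u θ = fderiv ℝ (fun w => ζ (w, u θ)) θ
      + (fderiv ℝ (fun v => ζ (θ, v)) (u θ)).comp (fderiv ℝ u θ) := by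
    intro θ
    have h1 : HasFDerivAt (fun w : (EuclideanSpace ℝ (Fin m)) => ((w, u w) : (EuclideanSpace ℝ (Fin m)) × (EuclideanSpace ℝ (Fin n))))
        ((ContinuousLinearMap.id ℝ (EuclideanSpace ℝ (Fin m))).prod (fderiv ℝ u θ)) θ :=
      (hasFDerivAt_id θ).prodMk (hud θ).hasFDerivAt
    have h2 : HasFDerivAt u
        ((fderiv ℝ ζ (θ, u θ)).comp ((ContinuousLinearMap.id ℝ (EuclideanSpace ℝ (Fin m))).prod (fderiv ℝ u θ))) θ := by
      have h2' := (hdiff (θ, u θ)).hasFDerivAt.comp θ h1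
      exact h2'.congr_of_eventuallyEq (Filter.Eventually.of_forall fun w => (hfix w).symm)
    have h4 : (fderiv ℝ ζ (θ, u θ)).comp ((ContinuousLinearMap.id ℝ (EuclideanSpace ℝ (Fin m))).prod (fderiv ℝ u θ))
        = (fderiv ℝ ζ (θ, u θ)).comp (ContinuousLinearMap.inl ℝ (EuclideanSpace ℝ (Fin m)) (EuclideanSpace ℝ (Fin n)))
          + ((fderiv ℝ ζ (θ, u θ)).comp (ContinuousLinearMap.inr ℝ (EuclideanSpace ℝ (Fin m)) (EuclideanSpace ℝ (Fin n)))).comp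
            (fderiv ℝ u θ) := by
      refine ContinuousLinearMap.ext fun x => ?_
      simp only [ContinuousLinearMap.comp_apply, ContinuousLinearMap.add_apply,
        ContinuousLinearMap.prod_apply, ContinuousLinearMap.coe_id',
        ContinuousLinearMap.inl_apply, ContinuousLinearMap.inr_apply, id_eq]
      have hsplit : ((x, (fderiv ℝ u θ) x) : (EuclideanSpace ℝ (Fin m)) × (EuclideanSpace ℝ (Fin n)))
          = ((x, 0) : (EuclideanSpace ℝ (Fin m)) × (EuclideanSpace ℝ (Fin n))) + ((0, (fderiv ℝ u θ) x) : (EuclideanSpace ℝ (Fin m)) × (EuclideanSpace ℝ (Fin n))) := by simp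
      rw [hsplit, map_add]
    rw [fderivB θ, fderivC θ]
    conv_lhs => rw [h2.fderiv]
    exact h4
  -- the closed-form Jacobian
  have hformula : ∀ θ : (EuclideanSpace ℝ (Fin m)), fderiv ℝ u θ =
      (Ring.inverse ((1 : (EuclideanSpace ℝ (Fin n)) →L[ℝ] (EuclideanSpace ℝ (Fin n))) - fderiv ℝ (fun v => ζ (θ, v)) (u θ))).comp
        (fderiv ℝ (fun w => ζ (w, u θ)) θ) := by
    intro θ
    have h1 : ((1 : (EuclideanSpace ℝ (Fin n)) →L[ℝ] (EuclideanSpace ℝ (Fin n))) - fderiv ℝ (fun v => ζ (θ, v)) (u θ)).comp (fderiv ℝ u θ)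
        = fderiv ℝ (fun w => ζ (w, u θ)) θ := by
      refine ContinuousLinearMap.ext fun x => ?_
      have hthis := congrArg (fun (T : (EuclideanSpace ℝ (Fin m)) →L[ℝ] (EuclideanSpace ℝ (Fin n))) => T x) (hkey θ)
      simp only [ContinuousLinearMap.comp_apply, ContinuousLinearMap.add_apply,
        ContinuousLinearMap.sub_apply, ContinuousLinearMap.one_apply] at hthis ⊢
      rw [sub_eq_iff_eq_add]
      exact hthis
    have h2 : (Ring.inverse ((1 : (EuclideanSpace ℝ (Fin n)) →L[ℝ] (EuclideanSpace ℝ (Fin n))) - fderiv ℝ (fun v => ζ (θ, v)) (u θ))).comp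
        ((((1 : (EuclideanSpace ℝ (Fin n)) →L[ℝ] (EuclideanSpace ℝ (Fin n))) - fderiv ℝ (fun v => ζ (θ, v)) (u θ))).comp (fderiv ℝ u θ))
        = fderiv ℝ u θ := by
      rw [← ContinuousLinearMap.comp_assoc, ← ContinuousLinearMap.mul_def
        (Ring.inverse ((1 : (EuclideanSpace ℝ (Fin n)) →L[ℝ] (EuclideanSpace ℝ (Fin n))) - fderiv ℝ (fun v => ζ (θ, v)) (u θ))),
        Ring.inverse_mul_cancel _ (hUnit θ)]
      rfl
    rw [← h2, h1]
  -- continuity of the derivative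
  have huc : Continuous u := hud.continuous
  have hDc : Continuous fun θ : (EuclideanSpace ℝ (Fin m)) => fderiv ℝ ζ (θ, u θ) :=
    (hζ.continuous_fderiv one_ne_zero).comp (continuous_id.prodMk huc)
  have hBc : Continuous fun θ : (EuclideanSpace ℝ (Fin m)) => (fderiv ℝ ζ (θ, u θ)).comp (ContinuousLinearMap.inr ℝ (EuclideanSpace ℝ (Fin m)) (EuclideanSpace ℝ (Fin n))) :=
    hDc.clm_comp continuous_const
  have hCc : Continuous fun θ : (EuclideanSpace ℝ (Fin m)) => (fderiv ℝ ζ (θ, u θ)).comp (ContinuousLinearMap.inl ℝ (EuclideanSpace ℝ (Fin m)) (EuclideanSpace ℝ (Fin n))) :=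
    hDc.clm_comp continuous_const
  have hIc : Continuous fun θ : (EuclideanSpace ℝ (Fin m)) => Ring.inverse ((1 : (EuclideanSpace ℝ (Fin n)) →L[ℝ] (EuclideanSpace ℝ (Fin n)))
      - (fderiv ℝ ζ (θ, u θ)).comp (ContinuousLinearMap.inr ℝ (EuclideanSpace ℝ (Fin m)) (EuclideanSpace ℝ (Fin n)))) := by
    rw [continuous_iff_continuousAt]
    intro θ
    have h1 : ContinuousAt (Ring.inverse : ((EuclideanSpace ℝ (Fin n)) →L[ℝ] (EuclideanSpace ℝ (Fin n))) → ((EuclideanSpace ℝ (Fin n)) →L[ℝ] (EuclideanSpace ℝ (Fin n))))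
        ((1 : (EuclideanSpace ℝ (Fin n)) →L[ℝ] (EuclideanSpace ℝ (Fin n))) - (fderiv ℝ ζ (θ, u θ)).comp (ContinuousLinearMap.inr ℝ (EuclideanSpace ℝ (Fin m)) (EuclideanSpace ℝ (Fin n)))) := by
      have := NormedRing.inverse_continuousAt (hUnit' θ).unit
      rwa [(hUnit' θ).unit_spec] at this
    have h2 : Continuous fun θ : (EuclideanSpace ℝ (Fin m)) => (1 : (EuclideanSpace ℝ (Fin n)) →L[ℝ] (EuclideanSpace ℝ (Fin n)))
        - (fderiv ℝ ζ (θ, u θ)).comp (ContinuousLinearMap.inr ℝ (EuclideanSpace ℝ (Fin m)) (EuclideanSpace ℝ (Fin n))) :=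
      continuous_const.sub hBc
    exact ContinuousAt.comp (g := (Ring.inverse : ((EuclideanSpace ℝ (Fin n)) →L[ℝ] (EuclideanSpace ℝ (Fin n))) → ((EuclideanSpace ℝ (Fin n)) →L[ℝ] (EuclideanSpace ℝ (Fin n)))))
      (f := fun θ : (EuclideanSpace ℝ (Fin m)) => (1 : (EuclideanSpace ℝ (Fin n)) →L[ℝ] (EuclideanSpace ℝ (Fin n)))
        - (fderiv ℝ ζ (θ, u θ)).comp (ContinuousLinearMap.inr ℝ (EuclideanSpace ℝ (Fin m)) (EuclideanSpace ℝ (Fin n)))) (x := θ)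
      h1 h2.continuousAt
  have hfc : Continuous fun θ : (EuclideanSpace ℝ (Fin m)) => fderiv ℝ u θ := by
    have heq : (fun θ : (EuclideanSpace ℝ (Fin m)) => fderiv ℝ u θ) = fun θ : (EuclideanSpace ℝ (Fin m)) =>
        (Ring.inverse ((1 : (EuclideanSpace ℝ (Fin n)) →L[ℝ] (EuclideanSpace ℝ (Fin n)))
          - (fderiv ℝ ζ (θ, u θ)).comp (ContinuousLinearMap.inr ℝ (EuclideanSpace ℝ (Fin m)) (EuclideanSpace ℝ (Fin n))))).comp
          ((fderiv ℝ ζ (θ, u θ)).comp (ContinuousLinearMap.inl ℝ (EuclideanSpace ℝ (Fin m)) (EuclideanSpace ℝ (Fin n)))) := by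
      funext θ
      rw [hformula θ, fderivB θ, fderivC θ]
    rw [heq]
    exact hIc.clm_comp hCc
  have hcd : ContDiff ℝ 1 u := contDiff_one_iff_fderiv.mpr ⟨hud, hfc⟩
  refine ⟨hcd, fun θ => ⟨hUnit θ, hformula θ, ?_⟩⟩
  -- the iteration
  intro z0
  set T := fun A : (EuclideanSpace ℝ (Fin m)) →L[ℝ] (EuclideanSpace ℝ (Fin n)) => (fderiv ℝ (fun v => ζ (θ, v)) (u θ)).comp A
    + fderiv ℝ (fun w => ζ (w, u θ)) θ with hT
  have hcontr : ContractingWith μ.toNNReal T := by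
    constructor
    · have hx : (μ.toNNReal : ℝ) < 1 := by rwa [Real.coe_toNNReal _ hμ0]
      exact_mod_cast hx
    · refine LipschitzWith.of_dist_le_mul fun z z' => ?_
      rw [dist_eq_norm, dist_eq_norm, Real.coe_toNNReal _ hμ0]
      have h2 : T z - T z' = (fderiv ℝ (fun v => ζ (θ, v)) (u θ)).comp (z - z') := by
        refine ContinuousLinearMap.ext fun x => ?_
        simp only [hT, ContinuousLinearMap.sub_apply, ContinuousLinearMap.add_apply,
          ContinuousLinearMap.comp_apply, map_sub]
        abel
      rw [h2]
      calc ‖(fderiv ℝ (fun v => ζ (θ, v)) (u θ)).comp (z - z')‖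
          ≤ ‖fderiv ℝ (fun v => ζ (θ, v)) (u θ)‖ * ‖z - z'‖ :=
            ContinuousLinearMap.opNorm_comp_le _ _
        _ ≤ μ * ‖z - z'‖ := mul_le_mul_of_nonneg_right (hBnorm θ) (norm_nonneg _)
  have hisfix : Function.IsFixedPt T (fderiv ℝ u θ) := by
    show (fderiv ℝ (fun v => ζ (θ, v)) (u θ)).comp (fderiv ℝ u θ)
      + fderiv ℝ (fun w => ζ (w, u θ)) θ = fderiv ℝ u θ
    rw [add_comm]
    exact (hkey θ).symm
  have htend := hcontr.tendsto_iterate_fixedPoint z0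
  rw [← hcontr.fixedPoint_unique hisfix] at htend
  exact htend
end

section
/- Consider the linear-quadratic team problem with team cost C(u) = Σ_{i=1}^N [ u_iᵀ Q_i u_i + u_iᵀ Σ_{j≠i} B_{ij} u_j + γᵀ u_i ], where each Q_i ∈ ℝ^{n×n} is symmetric, each B_{ij} ∈ ℝ^{n×n} is symmetric with B_{ij} = B_{ji}, and γ ∈ ℝ^n. Suppose each member's individual cost is C_i(u) = u_iᵀ Q_i u_i + 2 u_iᵀ Σ_{j≠i} B_{ij} u_j + γᵀ u_i. Then for every i and every u ∈ (ℝ^n)^N, the partial gradients coincide: ∇_{u_i} C_i(u) = ∇_{u_i} C(u) = 2 Q_i u_i + 2 Σ_{j≠i} B_{ij} u_j + γ. Consequently, if in addition C is convex on (ℝ^n)^N and each Ξ_i ⊆ ℝ^n is nonempty, compact and convex, then the set of Nash equilibria of the game with costs C_1, …, C_N coincides with the set of team-optimal solutions of the team problem with cost C. -/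
open RealInnerProductSpace

section Aux

variable {F : Type*} [NormedAddCommGroup F] [InnerProductSpace ℝ F] {N : ℕ}

def auxS (B : Fin N → Fin N → F →L[ℝ] F) (i : Fin N) (u : Fin N → F) : F :=
  ∑ j ∈ Finset.univ.erase i, B i j (u j)

def auxC (Q : Fin N → F →L[ℝ] F) (B : Fin N → Fin N → F →L[ℝ] F) (γ : F)
    (u : Fin N → F) : ℝ :=
  ∑ i, (⟪u i, Q i (u i)⟫ + ⟪u i, auxS B i u⟫ + ⟪γ, u i⟫)

def auxL (Q : Fin N → F →L[ℝ] F) (B : Fin N → Fin N → F →L[ℝ] F) (γ : F)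
    (u d : Fin N → F) : ℝ :=
  ∑ i, (2 * ⟪d i, Q i (u i)⟫ + 2 * ⟪d i, auxS B i u⟫ + ⟪γ, d i⟫)

def auxR (Q : Fin N → F →L[ℝ] F) (B : Fin N → Fin N → F →L[ℝ] F)
    (d : Fin N → F) : ℝ :=
  ∑ i, (⟪d i, Q i (d i)⟫ + ⟪d i, auxS B i d⟫)

lemma auxS_add_smul (B : Fin N → Fin N → F →L[ℝ] F) (i : Fin N) (u d : Fin N → F) (t : ℝ) :
    auxS B i (fun j => u j + t • d j) = auxS B i u + t • auxS B i d := by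
  simp [auxS, Finset.sum_add_distrib, Finset.smul_sum, smul_sub]

lemma aux_swap (B : Fin N → Fin N → F →L[ℝ] F)
    (hBsymm : ∀ i j (x y : F), ⟪B i j x, y⟫ = ⟪x, B i j y⟫)
    (hBij : ∀ i j, B i j = B j i) (a b : Fin N → F) :
    ∑ i, ⟪a i, auxS B i b⟫ = ∑ i, ⟪b i, auxS B i a⟫ := by
  have h1 : ∀ (c d : Fin N → F), ∑ i, ⟪c i, auxS B i d⟫ =
      ∑ i, ∑ j, (if j = i then 0 else ⟪c i, B i j (d j)⟫) := by
    intro c d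
    refine Finset.sum_congr rfl fun i _ => ?_
    rw [auxS, inner_sum]
    calc ∑ j ∈ Finset.univ.erase i, ⟪c i, B i j (d j)⟫
        = ∑ j ∈ Finset.univ.erase i, (if j = i then 0 else ⟪c i, B i j (d j)⟫) :=
          Finset.sum_congr rfl fun j hj => by rw [if_neg (Finset.ne_of_mem_erase hj)]
      _ = ∑ j, (if j = i then 0 else ⟪c i, B i j (d j)⟫) := Finset.sum_erase _ (by simp)
  rw [h1, h1, Finset.sum_comm]
  refine Finset.sum_congr rfl fun i _ => Finset.sum_congr rfl fun j _ => ?_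
  by_cases h : i = j
  · simp [h]
  · rw [if_neg h, if_neg (Ne.symm h), ← hBsymm, real_inner_comm, hBij]

lemma aux_expand (Q : Fin N → F →L[ℝ] F) (B : Fin N → Fin N → F →L[ℝ] F) (γ : F)
    (hQsymm : ∀ i (x y : F), ⟪Q i x, y⟫ = ⟪x, Q i y⟫)
    (hBsymm : ∀ i j (x y : F), ⟪B i j x, y⟫ = ⟪x, B i j y⟫)
    (hBij : ∀ i j, B i j = B j i) (u d : Fin N → F) (t : ℝ) :
    auxC Q B γ (fun j => u j + t • d j) =
      auxC Q B γ u + t * auxL Q B γ u d + t ^ 2 * auxR Q B d := by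
  have key : ∀ i : Fin N,
      ⟪u i + t • d i, Q i (u i + t • d i)⟫ +
        ⟪u i + t • d i, auxS B i (fun j => u j + t • d j)⟫ + ⟪γ, u i + t • d i⟫ =
      (⟪u i, Q i (u i)⟫ + ⟪u i, auxS B i u⟫ + ⟪γ, u i⟫) +
        t * (2 * ⟪d i, Q i (u i)⟫ + ⟪d i, auxS B i u⟫ + ⟪γ, d i⟫) +
        t * ⟪u i, auxS B i d⟫ +
        t ^ 2 * (⟪d i, Q i (d i)⟫ + ⟪d i, auxS B i d⟫) := by
    intro i
    rw [auxS_add_smul]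
    have hq : ⟪u i, Q i (d i)⟫ = ⟪d i, Q i (u i)⟫ := by rw [← hQsymm, real_inner_comm]
    simp only [map_add, map_smul, inner_add_left, inner_add_right, real_inner_smul_left,
      real_inner_smul_right, hq]
    ring
  rw [auxC, Finset.sum_congr rfl fun i _ => key i]
  simp only [Finset.sum_add_distrib, ← Finset.mul_sum]
  rw [aux_swap B hBsymm hBij u d]
  simp only [auxC, auxL, auxR, Finset.sum_add_distrib, ← Finset.mul_sum]
  ring

lemma aux_update (u : Fin N → F) (i : Fin N) (v : F) :
    Function.update u i v = fun j => u j + (1 : ℝ) • (Pi.single i (v - u i) : Fin N → F) j := by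
  funext j
  by_cases h : j = i
  · subst h; simp
  · simp [Function.update_of_ne h, Pi.single_eq_of_ne h]

lemma auxS_single (B : Fin N → Fin N → F →L[ℝ] F) (i : Fin N) (δ : F) :
    auxS B i (Pi.single i δ) = 0 := by
  refine Finset.sum_eq_zero fun j hj => ?_
  rw [Pi.single_eq_of_ne (Finset.ne_of_mem_erase hj), map_zero]

lemma auxL_single (Q : Fin N → F →L[ℝ] F) (B : Fin N → Fin N → F →L[ℝ] F) (γ : F)
    (u : Fin N → F) (i : Fin N) (δ : F) :
    auxL Q B γ u (Pi.single i δ) =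
      2 * ⟪δ, Q i (u i)⟫ + 2 * ⟪δ, auxS B i u⟫ + ⟪γ, δ⟫ := by
  rw [auxL, Finset.sum_eq_single i]
  · simp
  · intro j _ hj
    simp [Pi.single_eq_of_ne hj]
  · simp

lemma auxR_single (Q : Fin N → F →L[ℝ] F) (B : Fin N → Fin N → F →L[ℝ] F)
    (i : Fin N) (δ : F) :
    auxR Q B (Pi.single i δ) = ⟪δ, Q i δ⟫ := by
  rw [auxR, Finset.sum_eq_single i]
  · simp [auxS_single]
  · intro j _ hj
    simp [Pi.single_eq_of_ne hj]
  · simp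

lemma aux_qform_expand (Qi : F →L[ℝ] F) (hsym : ∀ x y : F, ⟪Qi x, y⟫ = ⟪x, Qi y⟫)
    (S γ x δ : F) :
    ⟪x + δ, Qi (x + δ)⟫ + 2 * ⟪x + δ, S⟫ + ⟪γ, x + δ⟫ =
      (⟪x, Qi x⟫ + 2 * ⟪x, S⟫ + ⟪γ, x⟫) +
        (2 * ⟪δ, Qi x⟫ + 2 * ⟪δ, S⟫ + ⟪γ, δ⟫) + ⟪δ, Qi δ⟫ := by
  have hq : ⟪x, Qi δ⟫ = ⟪δ, Qi x⟫ := by rw [← hsym, real_inner_comm]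
  simp only [map_add, inner_add_left, inner_add_right, hq]
  ring

lemma aux_small_t (a b : ℝ) (h : ∀ t : ℝ, 0 < t → t ≤ 1 → 0 ≤ t * a + t ^ 2 * b) :
    0 ≤ a := by
  by_contra h'
  push_neg at h'
  rcases le_or_gt b 0 with hb | hb
  · have := h 1 one_pos le_rfl
    nlinarith
  · have ht1 : (0:ℝ) < min 1 (-a / (2 * b)) :=
      lt_min one_pos (div_pos (by linarith) (by linarith))
    have hle := h _ ht1 (min_le_left _ _)
    have h2 : min 1 (-a / (2 * b)) ≤ -a / (2 * b) := min_le_right _ _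
    have h3 : min 1 (-a / (2 * b)) * (2 * b) ≤ -a :=
      (le_div_iff₀ (by linarith : (0:ℝ) < 2 * b)).mp h2
    nlinarith [mul_le_mul_of_nonneg_left h3 ht1.le, mul_pos ht1 (neg_pos.mpr h')]

variable [CompleteSpace F]

lemma aux_grad (Qi : F →L[ℝ] F) (hsym : ∀ x y : F, ⟪Qi x, y⟫ = ⟪x, Qi y⟫)
    (c : F) (k : ℝ) (x : F) :
    HasGradientAt (fun v => ⟪v, Qi v⟫ + ⟪v, c⟫ + k) ((2 : ℝ) • Qi x + c) x := by
  rw [hasGradientAt_iff_hasFDerivAt]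
  have h1 : HasFDerivAt (fun v : F => ⟪v, Qi v⟫)
      ((fderivInnerCLM ℝ (x, Qi x)).comp ((ContinuousLinearMap.id ℝ F).prod Qi)) x :=
    (hasFDerivAt_id x).inner ℝ (Qi.hasFDerivAt)
  have h2 : HasFDerivAt (fun v : F => ⟪v, c⟫ + k) (innerSL ℝ c) x := by
    have h3 : (fun v : F => ⟪v, c⟫ + k) = fun v => innerSL ℝ c v + k := by
      funext v; rw [innerSL_apply_apply, real_inner_comm]
    rw [h3]
    exact ((innerSL ℝ c).hasFDerivAt).add_const k
  have h4 := h1.add h2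
  have h5 : (fun v : F => ⟪v, Qi v⟫ + (⟪v, c⟫ + k)) = fun v => ⟪v, Qi v⟫ + ⟪v, c⟫ + k := by
    funext v; ring
  rw [show ((fun v : F => ⟪v, Qi v⟫) + fun v => ⟪v, c⟫ + k) = fun v : F => ⟪v, Qi v⟫ + (⟪v, c⟫ + k) from rfl, h5] at h4
  refine h4.congr_fderiv ?_
  ext h
  simp only [ContinuousLinearMap.add_apply, ContinuousLinearMap.comp_apply,
    ContinuousLinearMap.prod_apply, ContinuousLinearMap.id_apply, fderivInnerCLM_apply,
    innerSL_apply_apply, InnerProductSpace.toDual_apply_apply, inner_add_left, real_inner_smul_left]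
  have hq : ⟪x, Qi h⟫ = ⟪Qi x, h⟫ := (hsym x h).symm
  rw [hq, real_inner_comm h (Qi x)]
  ring

end Aux

/-- For the linear-quadratic team cost
`C(u) = Σ_i [u_iᵀQ_iu_i + u_iᵀ Σ_{j≠i} B_{ij} u_j + γᵀu_i]` with `Q_i` symmetric and
`B_{ij}` symmetric with `B_{ij} = B_{ji}`, and individual costs
`C_i(u) = u_iᵀQ_iu_i + 2u_iᵀ Σ_{j≠i} B_{ij} u_j + γᵀu_i`, the partial gradients coincide:
`∇_{u_i}C_i(u) = ∇_{u_i}C(u) = 2Q_iu_i + 2Σ_{j≠i}B_{ij}u_j + γ`. Consequently, if `C` is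
convex and each `Ξ i` is nonempty, compact and convex, the set of Nash equilibria of the
game with costs `C_1, …, C_N` coincides with the set of team-optimal solutions. -/
theorem linear_quadratic_NE_eq_team_optimal
    (n N : ℕ)
    (Q : Fin N → EuclideanSpace ℝ (Fin n) →L[ℝ] EuclideanSpace ℝ (Fin n))
    (B : Fin N → Fin N → EuclideanSpace ℝ (Fin n) →L[ℝ] EuclideanSpace ℝ (Fin n))
    (γ : EuclideanSpace ℝ (Fin n))
    (hQsymm : ∀ i (x y : EuclideanSpace ℝ (Fin n)), ⟪Q i x, y⟫ = ⟪x, Q i y⟫)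
    (hBsymm : ∀ i j (x y : EuclideanSpace ℝ (Fin n)), ⟪B i j x, y⟫ = ⟪x, B i j y⟫)
    (hBij : ∀ i j, B i j = B j i)
    (C : (Fin N → EuclideanSpace ℝ (Fin n)) → ℝ)
    (hC : ∀ u, C u = ∑ i,
      (⟪u i, Q i (u i)⟫ + ⟪u i, ∑ j ∈ Finset.univ.erase i, B i j (u j)⟫ + ⟪γ, u i⟫))
    (Ci : Fin N → (Fin N → EuclideanSpace ℝ (Fin n)) → ℝ)
    (hCi : ∀ i u, Ci i u =
      ⟪u i, Q i (u i)⟫ + 2 * ⟪u i, ∑ j ∈ Finset.univ.erase i, B i j (u j)⟫ + ⟪γ, u i⟫) :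
    (∀ i (u : Fin N → EuclideanSpace ℝ (Fin n)),
      gradient (fun v => Ci i (Function.update u i v)) (u i) =
        gradient (fun v => C (Function.update u i v)) (u i) ∧
      gradient (fun v => C (Function.update u i v)) (u i) =
        (2 : ℝ) • Q i (u i) +
          (2 : ℝ) • (∑ j ∈ Finset.univ.erase i, B i j (u j)) + γ) ∧
    (∀ Ξ : Fin N → Set (EuclideanSpace ℝ (Fin n)),
      ConvexOn ℝ Set.univ C →
      (∀ i, (Ξ i).Nonempty) → (∀ i, IsCompact (Ξ i)) → (∀ i, Convex ℝ (Ξ i)) →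
      {u : Fin N → EuclideanSpace ℝ (Fin n) |
          (∀ i, u i ∈ Ξ i) ∧
          ∀ i, ∀ v ∈ Ξ i, Ci i u ≤ Ci i (Function.update u i v)} =
      {u : Fin N → EuclideanSpace ℝ (Fin n) |
          (∀ i, u i ∈ Ξ i) ∧
          ∀ w : Fin N → EuclideanSpace ℝ (Fin n), (∀ i, w i ∈ Ξ i) → C u ≤ C w}) := by
  have hCaux : ∀ u, C u = auxC Q B γ u := hC
  -- closed form for Ci at an updated point
  have hCiupd : ∀ (u : Fin N → EuclideanSpace ℝ (Fin n)) (i : Fin N) (v),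
      Ci i (Function.update u i v) =
        ⟪v, Q i v⟫ + 2 * ⟪v, auxS B i u⟫ + ⟪γ, v⟫ := by
    intro u i v
    rw [hCi i (Function.update u i v)]
    simp only [Function.update_self]
    have hS : (∑ j ∈ Finset.univ.erase i, B i j (Function.update u i v j)) = auxS B i u :=
      Finset.sum_congr rfl fun j hj => by
        rw [Function.update_of_ne (Finset.ne_of_mem_erase hj)]
    rw [hS]
  -- quadratic expansion of C along a single-coordinate update
  have hupdC : ∀ (u : Fin N → EuclideanSpace ℝ (Fin n)) (i : Fin N) (v),
      C (Function.update u i v) = C u +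
        (2 * ⟪v - u i, Q i (u i)⟫ + 2 * ⟪v - u i, auxS B i u⟫ + ⟪γ, v - u i⟫) +
        ⟪v - u i, Q i (v - u i)⟫ := by
    intro u i v
    rw [hCaux (Function.update u i v), hCaux u, aux_update u i v,
      aux_expand Q B γ hQsymm hBsymm hBij u (Pi.single i (v - u i)) 1,
      auxL_single, auxR_single]
    ring
  -- quadratic expansion of Ci along a single-coordinate update
  have hupdCi : ∀ (u : Fin N → EuclideanSpace ℝ (Fin n)) (i : Fin N) (v),
      Ci i (Function.update u i v) = Ci i u +
        (2 * ⟪v - u i, Q i (u i)⟫ + 2 * ⟪v - u i, auxS B i u⟫ + ⟪γ, v - u i⟫) +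
        ⟪v - u i, Q i (v - u i)⟫ := by
    intro u i v
    have h := aux_qform_expand (Q i) (hQsymm i) (auxS B i u) γ (u i) (v - u i)
    have hv : u i + (v - u i) = v := by abel
    rw [hv] at h
    rw [hCiupd u i v, hCi i u,
      show (∑ j ∈ Finset.univ.erase i, B i j (u j)) = auxS B i u from rfl]
    linarith [h]
  constructor
  · -- gradient statements
    intro i u
    have hCifun : (fun v => Ci i (Function.update u i v)) =
        fun v => ⟪v, Q i v⟫ + ⟪v, (2:ℝ) • auxS B i u + γ⟫ + 0 := by
      funext v
      rw [hCiupd u i v, inner_add_right, real_inner_smul_right, real_inner_comm v γ]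
      ring
    have hCfun : (fun v => C (Function.update u i v)) =
        fun v => ⟪v, Q i v⟫ + ⟪v, (2:ℝ) • auxS B i u + γ⟫ + (C u - Ci i u) := by
      funext v
      have h1 := hupdC u i v
      have h2 := hupdCi u i v
      have h3 : C (Function.update u i v) =
          Ci i (Function.update u i v) + (C u - Ci i u) := by linarith
      rw [h3, congrFun hCifun v]
      ring
    have hg1 := (aux_grad (Q i) (hQsymm i) ((2:ℝ) • auxS B i u + γ) 0 (u i)).gradient
    have hg2 := (aux_grad (Q i) (hQsymm i) ((2:ℝ) • auxS B i u + γ)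
      (C u - Ci i u) (u i)).gradient
    constructor
    · rw [hCifun, hCfun, hg1, hg2]
    · rw [hCfun, hg2]
      exact (add_assoc _ _ _).symm
  · -- set equality
    intro Ξ hconv _hne _hcomp hcvx
    ext u
    simp only [Set.mem_setOf_eq]
    constructor
    · rintro ⟨hfeas, hNE⟩
      refine ⟨hfeas, fun w hw => ?_⟩
      set d : Fin N → EuclideanSpace ℝ (Fin n) := fun j => w j - u j with hd
      -- first-order nonnegativity in each coordinate
      have hA : ∀ i, 0 ≤ 2 * ⟪d i, Q i (u i)⟫ + 2 * ⟪d i, auxS B i u⟫ + ⟪γ, d i⟫ := by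
        intro i
        refine aux_small_t _ (⟪d i, Q i (d i)⟫) (fun t ht0 ht1 => ?_)
        have hmem : (1 - t) • u i + t • w i ∈ Ξ i :=
          hcvx i (hfeas i) (hw i) (by linarith) ht0.le (by ring)
        have heq : u i + t • d i = (1 - t) • u i + t • w i := by
          simp only [hd]
          module
        have hvmem : u i + t • d i ∈ Ξ i := by rw [heq]; exact hmem
        have hle := hNE i _ hvmem
        have h2 := hupdCi u i (u i + t • d i)
        rw [add_sub_cancel_left] at h2
        simp only [real_inner_smul_left, real_inner_smul_right, map_smul] at h2
        nlinarith [hle, h2]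
      -- second-order nonnegativity from convexity
      have he2 : (fun j => u j + d j) = w := by
        funext j; simp [hd]
      have hexp1 := aux_expand Q B γ hQsymm hBsymm hBij u d 1
      simp only [one_smul, one_mul, one_pow] at hexp1
      have hwexp : C w = C u + auxL Q B γ u d + auxR Q B d := by
        rw [hCaux w, hCaux u, ← he2, hexp1]
      have hR : 0 ≤ auxR Q B d := by
        have hmid := hconv.2 (Set.mem_univ u) (Set.mem_univ w)
          (by norm_num : (0:ℝ) ≤ 1/2) (by norm_num : (0:ℝ) ≤ 1/2) (by norm_num)
        have he1 : ((1/2 : ℝ) • u + (1/2 : ℝ) • w) = fun j => u j + (1/2 : ℝ) • d j := by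
          funext j
          simp only [Pi.add_apply, Pi.smul_apply, hd]
          module
        rw [he1, hCaux, aux_expand Q B γ hQsymm hBsymm hBij u d (1/2), ← hCaux u,
          hwexp] at hmid
        simp only [smul_eq_mul] at hmid
        nlinarith [hmid]
      have hLsum : 0 ≤ auxL Q B γ u d :=
        Finset.sum_nonneg fun i _ => hA i
      linarith [hwexp, hR, hLsum]
    · rintro ⟨hfeas, hopt⟩
      refine ⟨hfeas, fun i v hv => ?_⟩
      have hfw : ∀ j, Function.update u i v j ∈ Ξ j := by
        intro j
        by_cases h : j = i
        · subst h; simpa using hv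
        · rw [Function.update_of_ne h]; exact hfeas j
      have h1 := hopt _ hfw
      have h2 := hupdC u i v
      have h3 := hupdCi u i v
      linarith
end
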